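/- Let X be an abelian group with 2X = X, and let f, g : X → ℂ be nowhere-vanishing functions, each satisfying the Hermitian condition f(−x) = conj(f(x)), which satisfy the Kac–Bernstein functional equation f(x+y)·g(x−y) = f(x)·f(y)·g(x)·g(−y) for all x, y ∈ X. Then there exist signs ε, δ ∈ {−1, 1}, unitary characters α, β : X → ℂ, a quadratic function P : X → ℝ, and a real constant r, such that f(x) = ε·α(x)·exp(P(x) + r) and g(x) = δ·β(x)·exp(P(x) − r) for all x ∈ X. -/

import Mathlib

theorem kac_bernstein_hermitian_two_divisible {X : Type*} [AddCommGroup X]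
    (h2 : ∀ x : X, ∃ y : X, 2 • y = x)
    (f g : X → ℂ)
    (hf0 : ∀ x, f x ≠ 0) (hg0 : ∀ x, g x ≠ 0)
    (hfH : ∀ x : X, f (-x) = starRingEnd ℂ (f x))
    (hgH : ∀ x : X, g (-x) = starRingEnd ℂ (g x))
    (hKB : ∀ x y : X, f (x + y) * g (x - y) = f x * f y * g x * g (-y)) :
    ∃ (ε δ : ℝ) (α β : X → ℂ) (P : X → ℝ) (r : ℝ),
      (ε = 1 ∨ ε = -1) ∧ (δ = 1 ∨ δ = -1) ∧
      (∀ x y : X, α (x + y) = α x * α y) ∧ (∀ x : X, ‖α x‖ = 1) ∧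
      (∀ x y : X, β (x + y) = β x * β y) ∧ (∀ x : X, ‖β x‖ = 1) ∧
      (∀ x y : X, P (x + y) + P (x - y) = 2 * (P x + P y)) ∧
      (∀ x : X, f x = (ε : ℂ) * α x * Complex.exp ((P x + r : ℝ) : ℂ)) ∧
      (∀ x : X, g x = (δ : ℂ) * β x * Complex.exp ((P x - r : ℝ) : ℂ)) := by
  classical
  have h2' : ∀ x : X, ∃ y : X, y + y = x := by
    intro x; obtain ⟨y, hy⟩ := h2 x; exact ⟨y, by rwa [two_nsmul] at hy⟩
  set F : X → ℝ := fun t => ‖f t‖ with hFdef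
  set G : X → ℝ := fun t => ‖g t‖ with hGdef
  have hFpos : ∀ t, 0 < F t := fun t => norm_pos_iff.mpr (hf0 t)
  have hGpos : ∀ t, 0 < G t := fun t => norm_pos_iff.mpr (hg0 t)
  have hFne : ∀ t, F t ≠ 0 := fun t => ne_of_gt (hFpos t)
  have hGne : ∀ t, G t ≠ 0 := fun t => ne_of_gt (hGpos t)
  have hFCne : ∀ t, (F t : ℂ) ≠ 0 := fun t => by exact_mod_cast hFne t
  have hGCne : ∀ t, (G t : ℂ) ≠ 0 := fun t => by exact_mod_cast hGne t
  have hFeven : ∀ t, F (-t) = F t := by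
    intro t; simp [hFdef, hfH t, Complex.norm_conj]
  have hGeven : ∀ t, G (-t) = G t := by
    intro t; simp [hGdef, hgH t, Complex.norm_conj]
  set u : X → ℂ := fun t => f t / (F t : ℂ) with hudef
  set v : X → ℂ := fun t => g t / (G t : ℂ) with hvdef
  have hfu : ∀ t, f t = u t * (F t : ℂ) := fun t => by
    simp only [hudef]; rw [div_mul_cancel₀ _ (hFCne t)]
  have hgv : ∀ t, g t = v t * (G t : ℂ) := fun t => by
    simp only [hvdef]; rw [div_mul_cancel₀ _ (hGCne t)]
  have hune : ∀ t, u t ≠ 0 := fun t => div_ne_zero (hf0 t) (hFCne t)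
  have hvne : ∀ t, v t ≠ 0 := fun t => div_ne_zero (hg0 t) (hGCne t)
  have huabs : ∀ t, ‖u t‖ = 1 := by
    intro t
    simp only [hudef, norm_div, Complex.norm_real, Real.norm_eq_abs, abs_of_pos (hFpos t)]
    rw [hFdef]
    exact div_self (hFne t)
  have hvabs : ∀ t, ‖v t‖ = 1 := by
    intro t
    simp only [hvdef, norm_div, Complex.norm_real, Real.norm_eq_abs, abs_of_pos (hGpos t)]
    rw [hGdef]
    exact div_self (hGne t)
  have huconj : ∀ t, u (-t) = starRingEnd ℂ (u t) := by
    intro t; simp only [hudef, hfH t, hFeven t, map_div₀, Complex.conj_ofReal]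
  have hvconj : ∀ t, v (-t) = starRingEnd ℂ (v t) := by
    intro t; simp only [hvdef, hgH t, hGeven t, map_div₀, Complex.conj_ofReal]
  have huu : ∀ t, u t * u (-t) = 1 := by
    intro t
    rw [huconj t, Complex.mul_conj]
    rw [Complex.normSq_eq_norm_sq, huabs t]
    norm_num
  have hvv : ∀ t, v t * v (-t) = 1 := by
    intro t
    rw [hvconj t, Complex.mul_conj]
    rw [Complex.normSq_eq_norm_sq, hvabs t]
    norm_num
  have mKB : ∀ x y, F (x + y) * G (x - y) = F x * F y * G x * G y := by
    intro x y
    have h := congrArg (‖·‖) (hKB x y)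
    simpa [hFdef, hGdef, norm_mul, hgH, Complex.norm_conj] using h
  have hKBu : ∀ x y, u (x + y) * v (x - y) = u x * u y * v x * v (-y) := by
    intro x y
    have hmC : ((F (x + y) : ℂ)) * ((G (x - y) : ℂ)) =
        (F x : ℂ) * (F y : ℂ) * (G x : ℂ) * (G y : ℂ) := by exact_mod_cast mKB x y
    have hnz : ((F x : ℂ) * (F y : ℂ) * (G x : ℂ) * (G y : ℂ)) ≠ 0 := by
      exact mul_ne_zero (mul_ne_zero (mul_ne_zero (hFCne x) (hFCne y)) (hGCne x)) (hGCne y)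
    apply mul_right_cancel₀ hnz
    calc u (x + y) * v (x - y) * ((F x : ℂ) * (F y : ℂ) * (G x : ℂ) * (G y : ℂ))
        = u (x + y) * v (x - y) * ((F (x + y) : ℂ) * (G (x - y) : ℂ)) := by rw [hmC]
      _ = (u (x + y) * (F (x + y) : ℂ)) * (v (x - y) * (G (x - y) : ℂ)) := by ring
      _ = f (x + y) * g (x - y) := by rw [← hfu, ← hgv]
      _ = f x * f y * g x * g (-y) := hKB x y
      _ = (u x * (F x : ℂ)) * (u y * (F y : ℂ)) * (v x * (G x : ℂ)) *
            (v (-y) * (G (-y) : ℂ)) := by rw [← hfu, ← hfu, ← hgv, ← hgv]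
      _ = u x * u y * v x * v (-y) * ((F x : ℂ) * (F y : ℂ) * (G x : ℂ) * (G y : ℂ)) := by
            rw [hGeven]; ring
  have hKBu' : ∀ x y, u (x - y) * v (x + y) = u x * u (-y) * v x * v y := by
    intro x y
    have h := hKBu x (-y)
    simpa only [← sub_eq_add_neg, sub_neg_eq_add, neg_neg] using h
  set a : X → ℂ := fun t => u t * v t with hadef
  set b : X → ℂ := fun t => u t * v (-t) with hbdef
  have hane : ∀ t, a t ≠ 0 := fun t => mul_ne_zero (hune t) (hvne t)
  have hbne : ∀ t, b t ≠ 0 := fun t => mul_ne_zero (hune t) (hvne (-t))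
  have hainv : ∀ t, a t * a (-t) = 1 := by
    intro t
    calc a t * a (-t) = (u t * u (-t)) * (v t * v (-t)) := by simp only [hadef]; ring
      _ = 1 := by rw [huu, hvv]; norm_num
  have ha0 : a 0 = 1 := by
    have h := hKBu 0 0
    simp only [add_zero, sub_zero, neg_zero] at h
    have h2c : (u 0 * v 0) * 1 = (u 0 * v 0) * (u 0 * v 0) := by linear_combination h
    have := (mul_left_cancel₀ (mul_ne_zero (hune 0) (hvne 0)) h2c).symm
    simpa only [hadef] using this
  have hb0 : b 0 = 1 := by
    have : b 0 = a 0 := by simp only [hadef, hbdef, neg_zero]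
    rw [this, ha0]
  -- u 0 is ±1
  have hcu0 : starRingEnd ℂ (u 0) = u 0 := by
    have h := huconj 0; rw [neg_zero] at h; exact h.symm
  have him0 : (u 0).im = 0 := by
    have := congrArg Complex.im hcu0
    simp only [Complex.conj_im] at this
    linarith
  have hre0 : u 0 = (((u 0).re : ℝ) : ℂ) := by
    apply Complex.ext <;> simp [him0]
  obtain ⟨e, he, heu⟩ : ∃ e : ℝ, (e = 1 ∨ e = -1) ∧ ((e : ℂ) = u 0) := by
    have habs0 := huabs 0
    rw [hre0, Complex.norm_real, Real.norm_eq_abs] at habs0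
    rcases (abs_eq (zero_le_one)).mp habs0 with h | h
    · exact ⟨1, Or.inl rfl, by rw [hre0, h]⟩
    · exact ⟨-1, Or.inr rfl, by rw [hre0, h]⟩
  have he2 : ((e : ℂ)) * e = 1 := by rcases he with h | h <;> rw [h] <;> norm_num
  have hu0sq : u 0 * u 0 = 1 := by rw [← heu]; exact he2
  have hv0 : v 0 = u 0 := by
    have h1 : u 0 * v 0 = 1 := by simpa only [hadef] using ha0
    exact mul_left_cancel₀ (hune 0) (h1.trans hu0sq.symm)
  -- a satisfies the parallelogram-type identity
  have ha2 : ∀ x y, a (x + y) * a (x - y) = a x * a x := by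
    intro x y
    calc a (x + y) * a (x - y) = (u (x + y) * v (x - y)) * (u (x - y) * v (x + y)) := by
          simp only [hadef]; ring
      _ = (u x * u y * v x * v (-y)) * (u x * u (-y) * v x * v y) := by rw [hKBu, hKBu']
      _ = (a x * a x) * ((u y * u (-y)) * (v y * v (-y))) := by simp only [hadef]; ring
      _ = a x * a x := by rw [huu, hvv]; ring
  have hadd_a : ∀ s, a (s + s) = a s * a s := by
    intro s
    have h := ha2 s s
    rwa [sub_self, ha0, mul_one] at h
  have ha_sq : ∀ x y, a (x + y) * a (x + y) = (a x * a x) * (a y * a y) := by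
    intro x y
    have h1 := ha2 x y
    have h2 := ha2 y x
    have key : a (x + y) * a (x + y) = (a (x + y) * a (x - y)) * (a (y + x) * a (y - x)) := by
      rw [show y - x = -(x - y) from (neg_sub x y).symm, add_comm y x]
      linear_combination (-(a (x + y) * a (x + y))) * hainv (x - y)
    rw [key, h1, h2]
  have ha_char : ∀ p q, a (p + q) = a p * a q := by
    intro p q
    obtain ⟨x, hx⟩ := h2' p
    obtain ⟨y, hy⟩ := h2' q
    have hpq : p + q = (x + y) + (x + y) := by rw [← hx, ← hy]; abel
    rw [hpq, hadd_a, ha_sq, ← hadd_a, ← hadd_a, hx, hy]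
  -- b is a character
  have k1 : ∀ x y, u (x + y) * v (x - y) * (u (-y) * v y) = u x * v x := by
    intro x y
    rw [hKBu]
    linear_combination (u x * v x * (v y * v (-y))) * huu y + (u x * v x) * hvv y
  have k2 : ∀ x y, u (x - y) * v (x + y) * (u y * v (-y)) = u x * v x := by
    intro x y
    rw [hKBu']
    linear_combination (u x * v x * (v y * v (-y))) * huu y + (u x * v x) * hvv y
  have hstar : ∀ x y, u (x + y) * v (x - y) * (u (-y) * v y) =
      u (x - y) * v (x + y) * (u y * v (-y)) := fun x y => (k1 x y).trans (k2 x y).symm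
  have hb2m : ∀ x y, b (x + y) * b (-y) = b (x - y) * b y := by
    intro x y
    simp only [hbdef, neg_neg]
    linear_combination (v (-(x + y)) * v (-(x - y))) * hstar x y -
      (u (x + y) * v (-(x + y)) * u (-y) * v y) * hvv (x - y) +
      (u (x - y) * v (-(x - y)) * u y * v (-y)) * hvv (x + y)
  have hb_add2 : ∀ x y, b (x + (y + y)) = b x * b (y + y) := by
    intro x y
    have e1 := hb2m (x + y) y
    rw [show x + y + y = x + (y + y) from by abel, add_sub_cancel_right] at e1
    have e2 := hb2m y y
    rw [sub_self, hb0, one_mul] at e2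
    have e3 : b (x + (y + y)) * b (-y) = (b x * b (y + y)) * b (-y) := by
      rw [e1]; linear_combination (-(b x)) * e2
    exact mul_right_cancel₀ (hbne (-y)) e3
  have hb_char : ∀ p q, b (p + q) = b p * b q := by
    intro p q
    obtain ⟨y, hy⟩ := h2' q
    rw [← hy]
    exact hb_add2 p y
  have hab : ∀ s, a s * b s = u s * u s := by
    intro s; simp only [hadef, hbdef]
    linear_combination (u s * u s) * hvv s
  have hab' : ∀ s, a s * b (-s) = v s * v s := by
    intro s; simp only [hadef, hbdef, neg_neg]
    linear_combination (v s * v s) * huu s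
  have hu2x : ∀ s, u (s + s) * v 0 = u s * u s := by
    intro s
    have h := hKBu s s
    rw [sub_self] at h
    rw [h]
    linear_combination (u s * u s) * hvv s
  have hv2x : ∀ s, u 0 * v (s + s) = v s * v s := by
    intro s
    have h := hKBu s (-s)
    simp only [add_neg_cancel, sub_neg_eq_add, neg_neg] at h
    rw [h]
    linear_combination (v s * v s) * huu s
  have hu_char : ∀ p q, u (p + q) * u 0 = u p * u q := by
    intro p q
    obtain ⟨x, hx⟩ := h2' p
    obtain ⟨y, hy⟩ := h2' q
    have hpq : p + q = (x + y) + (x + y) := by rw [← hx, ← hy]; abel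
    rw [hpq, ← hx, ← hy]
    have h1 := hu2x (x + y)
    have h5 := hu2x x
    have h6 := hu2x y
    rw [hv0] at h1 h5 h6
    calc u ((x + y) + (x + y)) * u 0 = u (x + y) * u (x + y) := h1
      _ = a (x + y) * b (x + y) := (hab (x + y)).symm
      _ = (a x * b x) * (a y * b y) := by rw [ha_char, hb_char]; ring
      _ = (u x * u x) * (u y * u y) := by rw [hab, hab]
      _ = (u (x + x) * u 0) * (u (y + y) * u 0) := by rw [h5, h6]
      _ = u (x + x) * u (y + y) := by linear_combination (u (x + x) * u (y + y)) * hu0sq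
  have hv_char : ∀ p q, v (p + q) * u 0 = v p * v q := by
    intro p q
    obtain ⟨x, hx⟩ := h2' p
    obtain ⟨y, hy⟩ := h2' q
    have hpq : p + q = (x + y) + (x + y) := by rw [← hx, ← hy]; abel
    rw [hpq, ← hx, ← hy]
    have h1 := hv2x (x + y)
    calc v ((x + y) + (x + y)) * u 0 = u 0 * v ((x + y) + (x + y)) := by ring
      _ = v (x + y) * v (x + y) := h1
      _ = a (x + y) * b (-(x + y)) := (hab' (x + y)).symm
      _ = (a x * b (-x)) * (a y * b (-y)) := by
            rw [ha_char, show -(x + y) = -x + -y from by abel, hb_char]; ring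
      _ = (v x * v x) * (v y * v y) := by rw [hab', hab']
      _ = (u 0 * v (x + x)) * (u 0 * v (y + y)) := by rw [hv2x, hv2x]
      _ = v (x + x) * v (y + y) := by linear_combination (v (x + x) * v (y + y)) * hu0sq
  -- modulus relations
  have hf0g0 : f 0 * g 0 = 1 := by
    have h := hKB 0 0
    simp only [add_zero, sub_zero, neg_zero] at h
    have h2c : (f 0 * g 0) * 1 = (f 0 * g 0) * (f 0 * g 0) := by linear_combination h
    exact (mul_left_cancel₀ (mul_ne_zero (hf0 0) (hg0 0)) h2c).symm
  have hF0G0 : F 0 * G 0 = 1 := by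
    have h := congrArg (‖·‖) hf0g0
    simpa [hFdef, hGdef, norm_mul] using h
  have hswap : ∀ x y, F (x + y) * G (x - y) = F (x - y) * G (x + y) := by
    intro x y
    have h1 := mKB x y
    have h2 := mKB x (-y)
    rw [← sub_eq_add_neg, sub_neg_eq_add, hFeven, hGeven] at h2
    exact h1.trans h2.symm
  have hratio : ∀ p q, F p * G q = F q * G p := by
    intro p q
    obtain ⟨y, hy⟩ := h2' (p - q)
    have hx : q + y + y = p := by rw [add_assoc, hy]; abel
    have h := hswap (q + y) y
    rw [hx, show q + y - y = q from by abel] at h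
    exact h
  have hGt : ∀ t, G t * (F 0 * F 0) = F t := by
    intro t
    have h := hratio t 0
    linear_combination F t * hF0G0 - F 0 * h
  have hFmult : ∀ x y, F (x + y) * F (x - y) * (F 0 * F 0) = (F x * F x) * (F y * F y) := by
    intro x y
    linear_combination ((F 0 * F 0) * (F 0 * F 0)) * mKB x y -
      (F (x + y) * (F 0 * F 0)) * hGt (x - y) +
      (F x * F y) * ((G y * (F 0 * F 0)) * hGt x + F x * hGt y)
  -- assemble
  refine ⟨e, e, fun t => (e : ℂ) * u t, fun t => (e : ℂ) * v t,
    fun t => Real.log (F t) - Real.log (F 0), Real.log (F 0), he, he, ?_, ?_, ?_, ?_, ?_, ?_, ?_⟩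
  · intro p q
    dsimp only
    have h := hu_char p q
    rw [← heu] at h
    linear_combination ((e : ℂ) * (e : ℂ)) * h - ((e : ℂ) * u (p + q)) * he2
  · intro t
    dsimp only
    rcases he with h | h <;> subst h <;> simp [norm_mul, huabs t, Complex.norm_real]
  · intro p q
    dsimp only
    have h := hv_char p q
    rw [← heu] at h
    linear_combination ((e : ℂ) * (e : ℂ)) * h - ((e : ℂ) * v (p + q)) * he2
  · intro t
    dsimp only
    rcases he with h | h <;> subst h <;> simp [norm_mul, hvabs t, Complex.norm_real]
  · intro x y
    dsimp only
    have h := hFmult x y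
    have l1 : Real.log (F (x + y) * F (x - y) * (F 0 * F 0)) =
        Real.log (F (x + y)) + Real.log (F (x - y)) + (Real.log (F 0) + Real.log (F 0)) := by
      rw [Real.log_mul (mul_ne_zero (hFne _) (hFne _)) (mul_ne_zero (hFne 0) (hFne 0)),
        Real.log_mul (hFne _) (hFne _), Real.log_mul (hFne 0) (hFne 0)]
    have l2 : Real.log ((F x * F x) * (F y * F y)) =
        (Real.log (F x) + Real.log (F x)) + (Real.log (F y) + Real.log (F y)) := by
      rw [Real.log_mul (mul_ne_zero (hFne x) (hFne x)) (mul_ne_zero (hFne y) (hFne y)),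
        Real.log_mul (hFne x) (hFne x), Real.log_mul (hFne y) (hFne y)]
    have hl := congrArg Real.log h
    rw [l1, l2] at hl
    linarith
  · intro t
    dsimp only
    have hexp : Complex.exp ((((Real.log (F t) - Real.log (F 0)) + Real.log (F 0)) : ℝ) : ℂ) =
        ((F t : ℝ) : ℂ) := by
      rw [show (Real.log (F t) - Real.log (F 0)) + Real.log (F 0) = Real.log (F t) from by ring]
      rw [← Complex.ofReal_exp, Real.exp_log (hFpos t)]
    rw [hexp, hfu t]
    linear_combination (-(u t * ((F t : ℝ) : ℂ))) * he2
  · intro t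
    dsimp only
    have hGlog : (Real.log (F t) - Real.log (F 0)) - Real.log (F 0) = Real.log (G t) := by
      conv_lhs => rw [← hGt t]
      rw [Real.log_mul (hGne t) (mul_ne_zero (hFne 0) (hFne 0)),
        Real.log_mul (hFne 0) (hFne 0)]
      ring
    have hexp : Complex.exp ((((Real.log (F t) - Real.log (F 0)) - Real.log (F 0)) : ℝ) : ℂ) =
        ((G t : ℝ) : ℂ) := by
      rw [hGlog, ← Complex.ofReal_exp, Real.exp_log (hGpos t)]
    rw [hexp, hgv t]
    linear_combination (-(v t * ((G t : ℝ) : ℂ))) * he2
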